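/- Assume f is twice differentiable and satisfies the cubic upper bound with constant L_H > 0, and assume ‖∇²f(x)‖_op ≤ L_g. Let ε_g, ε_h ∈ (0,1), η ∈ (0, 1/2), θ ∈ (0,1), and x ∈ ℝⁿ. Let d ∈ ℝⁿ satisfy: d_i = 0 whenever |x_i| ≤ √ε_g, ⟨g(x), d⟩ ≤ 0, ⟨d, ∇²f(x)·d⟩ = −‖d‖³, and ‖d‖ ≥ ε_h. Then there exists a smallest nonnegative integer j* such that φ(x + θ^{j*}d) < φ(x) − η·θ^{2j*}·ε_h·‖d‖², and φ(x) − φ(x + θ^{j*}d) ≥ η·θ²·min{1, 9(1 − 2η)²/L_H²}·min{ε_g·ε_h, ε_h³}. -/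

import Mathlib

open scoped RealInnerProductSpace

set_option maxHeartbeats 1000000

noncomputable section

/-- `ℝⁿ` with the Euclidean norm. -/
abbrev E (n : ℕ) := EuclideanSpace ℝ (Fin n)

/-- The vector `g(x)` measuring first-order stationarity of `f + lam‖·‖₁`. -/
def gvec (n : ℕ) (f : E n → ℝ) (lam : ℝ) (x : E n) : E n := WithLp.toLp 2 fun i =>
  if 0 < x i then gradient f x i + lam
  else if x i < 0 then gradient f x i - lam
  else gradient f x i - min (max (-lam) (gradient f x i)) lam

/-- The proximal-gradient residual `G_t(x) = t (x - prox_{(lam/t)‖·‖₁}(x - ∇f(x)/t))`. -/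
def Gres (n : ℕ) (f : E n → ℝ) (lam t : ℝ) (x : E n) : E n := WithLp.toLp 2 fun i =>
  if (gradient f x i + lam) / t < x i then gradient f x i + lam
  else if x i < (gradient f x i - lam) / t then gradient f x i - lam
  else t * x i

/-- The proximal-gradient update `P_t(x) = prox_{(lam/t)‖·‖₁}(x - ∇f(x)/t)` (soft-thresholding). -/
def Pt (n : ℕ) (f : E n → ℝ) (lam t : ℝ) (x : E n) : E n := WithLp.toLp 2 fun i =>
  if lam / t < x i - gradient f x i / t then x i - gradient f x i / t - lam / t
  else if x i - gradient f x i / t < -(lam / t) then x i - gradient f x i / t + lam / t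
  else 0

/-- The objective `φ(x) = f(x) + lam ‖x‖₁`. -/
def phi (n : ℕ) (f : E n → ℝ) (lam : ℝ) (x : E n) : ℝ := f x + lam * ∑ i, |x i|

/-- The Hessian of `f` at `x`, as a continuous linear map. -/
def hess (n : ℕ) (f : E n → ℝ) (x : E n) : E n →L[ℝ] E n := fderiv ℝ (gradient f) x

/-- The scaling map `S_{x,ε}`: identity on coordinates with `|x_i| > √ε`, multiplication by
`x_i` on the others. -/
def Smap (n : ℕ) (x : E n) (eps : ℝ) (u : E n) : E n := WithLp.toLp 2 fun i =>
  if Real.sqrt eps < |x i| then u i else x i * u i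

/-- The relaxed first-order residual vector `g^ε(x)`. -/
def gveps (n : ℕ) (f : E n → ℝ) (lam eps : ℝ) (x : E n) : E n := WithLp.toLp 2 fun i =>
  if Real.sqrt eps < x i then gradient f x i + lam
  else if x i < -Real.sqrt eps then gradient f x i - lam
  else gradient f x i -
    min (max (-(lam + eps ^ ((3:ℝ)/4))) (gradient f x i)) (lam + eps ^ ((3:ℝ)/4))

/-- A Newton-CG negative-curvature step: for a direction `d` supported on
`{i : |x_i| > √ε_g}` with `⟨g(x), d⟩ ≤ 0`, `⟨d, ∇²f(x)d⟩ = -‖d‖³` and `‖d‖ ≥ ε_h`, the line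
search terminates at a smallest `j*` and the decrease is at least
`ηθ² min{1, 9(1-2η)²/L_H²} min{ε_g ε_h, ε_h³}`. -/
theorem stmt12 {n : ℕ} (f : E n → ℝ) (hf1 : Differentiable ℝ f)
    (hf2 : Differentiable ℝ (gradient f)) (lam : ℝ) (hlam : 0 < lam)
    (LH : ℝ) (hLH : 0 < LH)
    (hcubic : ∀ x y : E n, f y ≤ f x + ⟪gradient f x, y - x⟫ +
      1 / 2 * ⟪y - x, hess n f x (y - x)⟫ + LH / 6 * ‖y - x‖ ^ 3)
    (εg εh η θ : ℝ) (hεg : εg ∈ Set.Ioo (0:ℝ) 1) (hεh : εh ∈ Set.Ioo (0:ℝ) 1)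
    (hη : η ∈ Set.Ioo (0:ℝ) (1/2)) (hθ : θ ∈ Set.Ioo (0:ℝ) 1)
    (x : E n) (Lg : ℝ) (hop : ‖hess n f x‖ ≤ Lg)
    (d : E n) (hd0 : ∀ i, |x i| ≤ Real.sqrt εg → d i = 0)
    (hgd : ⟪gvec n f lam x, d⟫ ≤ 0)
    (hcurv : ⟪d, hess n f x d⟫ = -‖d‖ ^ 3)
    (hdnorm : εh ≤ ‖d‖) :
    ∃ j : ℕ,
      (phi n f lam (x + θ ^ j • d) <
          phi n f lam x - η * θ ^ (2 * j) * εh * ‖d‖ ^ 2) ∧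
      (∀ j' < j, ¬(phi n f lam (x + θ ^ j' • d) <
          phi n f lam x - η * θ ^ (2 * j') * εh * ‖d‖ ^ 2)) ∧
      η * θ ^ 2 * min 1 (9 * (1 - 2 * η) ^ 2 / LH ^ 2) * min (εg * εh) (εh ^ 3) ≤
        phi n f lam x - phi n f lam (x + θ ^ j • d) := by
  classical
  obtain ⟨hεg0, hεg1⟩ := hεg
  obtain ⟨hεh0, hεh1⟩ := hεh
  obtain ⟨hη0, hη1⟩ := hη
  obtain ⟨hθ0, hθ1⟩ := hθ
  have hd : 0 < ‖d‖ := lt_of_lt_of_le hεh0 hdnorm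
  have hsεg : 0 < Real.sqrt εg := Real.sqrt_pos.mpr hεg0
  have h2η : 0 < 1 - 2 * η := by linarith
  set b : ℝ := 3 * (1 - 2 * η) / LH with hb
  have hbpos : 0 < b := by positivity
  have habs : ∀ i, |d i| ≤ ‖d‖ := by
    intro i
    rw [EuclideanSpace.norm_eq, ← Real.sqrt_sq_eq_abs]
    apply Real.sqrt_le_sqrt
    have := Finset.single_le_sum (f := fun j => ‖d j‖ ^ 2) (fun j _ => sq_nonneg _)
      (Finset.mem_univ i)
    simpa [Real.norm_eq_abs, sq_abs] using this
  have hinner : ∀ u v : E n, ⟪u, v⟫ = ∑ i, u i * v i := fun u v => by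
    simp [PiLp.inner_apply, RCLike.inner_apply, conj_trivial, mul_comm]
  have hd3 : εh * ‖d‖ ^ 2 ≤ ‖d‖ ^ 3 := by nlinarith [hd.le]
  -- the key "sufficient decrease" lemma for step size α
  have key : ∀ α : ℝ, 0 < α → α * ‖d‖ ≤ Real.sqrt εg → α < b →
      phi n f lam (x + α • d) < phi n f lam x - η * α ^ 2 * εh * ‖d‖ ^ 2 := by
    intro α hα h1 h2
    have hcoord : ∀ i : Fin n, lam * |x i + α * d i| =
        lam * |x i| + α * ((gvec n f lam x i - gradient f x i) * d i) := by
      intro i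
      by_cases hdi : d i = 0
      · simp [hdi]
      · have hxi : Real.sqrt εg < |x i| := by
          by_contra h
          exact hdi (hd0 i (le_of_not_gt h))
        have hαdi : α * |d i| ≤ Real.sqrt εg :=
          le_trans (by nlinarith [habs i, hα.le]) h1
        rcases lt_trichotomy (x i) 0 with hx | hx | hx
        · have hxabs : |x i| = -x i := abs_of_neg hx
          have hneg : x i + α * d i < 0 := by
            have h3 : α * d i ≤ α * |d i| := by nlinarith [le_abs_self (d i), hα.le]
            nlinarith
          rw [abs_of_neg hneg, hxabs]
          simp only [gvec, PiLp.toLp_apply]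
          rw [if_neg (by linarith), if_pos hx]
          ring
        · exfalso
          rw [hx] at hxi
          simp only [abs_zero] at hxi
          linarith
        · have hxabs : |x i| = x i := abs_of_pos hx
          have hpos : 0 < x i + α * d i := by
            have h3 : -(α * |d i|) ≤ α * d i := by nlinarith [neg_abs_le (d i), hα.le]
            nlinarith
          rw [abs_of_pos hpos, hxabs]
          simp only [gvec, PiLp.toLp_apply]
          rw [if_pos hx]
          ring
    have happ : ∀ i, (x + α • d) i = x i + α * d i := fun i => by
      simp [PiLp.add_apply, PiLp.smul_apply, smul_eq_mul]
    have hsum1 : (∑ i, |(x + α • d) i|) = ∑ i, |x i + α * d i| :=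
      Finset.sum_congr rfl fun i _ => by rw [happ i]
    have hsum2 : lam * ∑ i, |x i + α * d i| =
        lam * ∑ i, |x i| + α * (⟪gvec n f lam x, d⟫ - ⟪gradient f x, d⟫) := by
      calc lam * ∑ i, |x i + α * d i|
          = ∑ i, (lam * |x i| +
              α * (gvec n f lam x i * d i - gradient f x i * d i)) := by
            rw [Finset.mul_sum]
            exact Finset.sum_congr rfl fun i _ => by rw [hcoord i]; ring
        _ = lam * ∑ i, |x i| +
              α * ((∑ i, gvec n f lam x i * d i) - ∑ i, gradient f x i * d i) := by
            rw [Finset.sum_add_distrib, ← Finset.mul_sum, ← Finset.mul_sum,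
              Finset.sum_sub_distrib]
        _ = lam * ∑ i, |x i| + α * (⟪gvec n f lam x, d⟫ - ⟪gradient f x, d⟫) := by
            rw [hinner (gvec n f lam x) d, hinner (gradient f x) d]
    have hcub := hcubic x (x + α • d)
    rw [add_sub_cancel_left, real_inner_smul_right, map_smul, real_inner_smul_left,
      real_inner_smul_right, norm_smul, Real.norm_eq_abs, abs_of_pos hα, mul_pow,
      hcurv] at hcub
    have hGα : α * ⟪gvec n f lam x, d⟫ ≤ 0 :=
      mul_nonpos_of_nonneg_of_nonpos hα.le hgd
    have hbα : LH * α < 3 * (1 - 2 * η) := by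
      have := (lt_div_iff₀ hLH).mp h2
      linarith
    have p1 : (0:ℝ) < α ^ 2 * ‖d‖ ^ 3 := by positivity
    have p2 : 0 < (3 * (1 - 2 * η) - LH * α) * (α ^ 2 * ‖d‖ ^ 3) :=
      mul_pos (by linarith) p1
    have p3 : 0 ≤ η * (α ^ 2 * (‖d‖ ^ 3 - εh * ‖d‖ ^ 2)) :=
      mul_nonneg hη0.le (mul_nonneg (sq_nonneg α) (by linarith))
    simp only [phi]
    rw [hsum1, hsum2]
    nlinarith [hcub, hGα, p2, p3]
  -- the Armijo condition, as a predicate in j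
  have keyP : ∀ j : ℕ, θ ^ j * ‖d‖ ≤ Real.sqrt εg → θ ^ j < b →
      phi n f lam (x + θ ^ j • d) <
        phi n f lam x - η * θ ^ (2 * j) * εh * ‖d‖ ^ 2 := by
    intro j h1 h2
    have h := key (θ ^ j) (pow_pos hθ0 j) h1 h2
    rw [pow_mul']
    exact h
  have hminpos : 0 < min (Real.sqrt εg / ‖d‖) b := lt_min (by positivity) hbpos
  obtain ⟨J, hJ⟩ := exists_pow_lt_of_lt_one hminpos hθ1
  have hex : ∃ j : ℕ, phi n f lam (x + θ ^ j • d) <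
      phi n f lam x - η * θ ^ (2 * j) * εh * ‖d‖ ^ 2 := by
    refine ⟨J, keyP J ?_ (lt_of_lt_of_le hJ (min_le_right _ _))⟩
    have := lt_of_lt_of_le hJ (min_le_left _ _)
    exact le_of_lt ((lt_div_iff₀ hd).mp this)
  refine ⟨Nat.find hex, Nat.find_spec hex, fun j' hj' => Nat.find_min hex hj', ?_⟩
  set j := Nat.find hex with hjdef
  have hPj := Nat.find_spec hex
  have hc : 9 * (1 - 2 * η) ^ 2 / LH ^ 2 = b ^ 2 := by
    rw [hb, div_pow]
    ring_nf
  rw [hc]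
  have hsuffices : η * θ ^ 2 * min 1 (b ^ 2) * min (εg * εh) (εh ^ 3) ≤
      η * θ ^ (2 * j) * εh * ‖d‖ ^ 2 := by
    rcases Nat.eq_zero_or_pos j with h0 | hposj
    · rw [h0]
      have m1 : min 1 (b ^ 2) ≤ 1 := min_le_left _ _
      have m2 : min (εg * εh) (εh ^ 3) ≤ εh ^ 3 := min_le_right _ _
      have m1' : 0 ≤ min 1 (b ^ 2) := le_min (by norm_num) (sq_nonneg b)
      have m2' : 0 ≤ min (εg * εh) (εh ^ 3) := le_min (by positivity) (by positivity)
      have hθsq : θ ^ 2 ≤ 1 := pow_le_one₀ hθ0.le hθ1.le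
      calc η * θ ^ 2 * min 1 (b ^ 2) * min (εg * εh) (εh ^ 3)
          ≤ η * 1 * 1 * (εh ^ 3) := by gcongr
        _ ≤ η * θ ^ (2 * 0) * εh * ‖d‖ ^ 2 := by
            simp only [Nat.mul_zero, pow_zero]
            nlinarith [mul_le_mul hdnorm hdnorm hεh0.le hd.le, mul_pos hη0 hεh0]
    · have hnot := Nat.find_min hex (Nat.sub_lt hposj one_pos)
      rw [← hjdef] at hnot
      have hlow : min (Real.sqrt εg / ‖d‖) b ≤ θ ^ (j - 1) := by
        by_contra h
        push_neg at h
        refine hnot (keyP (j - 1) ?_ (lt_of_lt_of_le h (min_le_right _ _)))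
        exact le_of_lt ((lt_div_iff₀ hd).mp (lt_of_lt_of_le h (min_le_left _ _)))
      have hstep : θ ^ j = θ * θ ^ (j - 1) := by
        conv_rhs => rw [← pow_succ']
        rw [Nat.sub_add_cancel hposj]
      have hθj : θ * min (Real.sqrt εg / ‖d‖) b ≤ θ ^ j := by
        rw [hstep]
        exact mul_le_mul_of_nonneg_left hlow hθ0.le
      have hsq : (θ * min (Real.sqrt εg / ‖d‖) b) ^ 2 ≤ (θ ^ j) ^ 2 :=
        pow_le_pow_left₀ (by positivity) hθj 2
      have hsq_eq : (Real.sqrt εg / ‖d‖) ^ 2 = εg / ‖d‖ ^ 2 := by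
        rw [div_pow, Real.sq_sqrt hεg0.le]
      have hm2 : (min (Real.sqrt εg / ‖d‖) b) ^ 2 = min (εg / ‖d‖ ^ 2) (b ^ 2) := by
        rcases le_total (Real.sqrt εg / ‖d‖) b with h | h
        · rw [min_eq_left h, hsq_eq, min_eq_left]
          rw [← hsq_eq]
          exact pow_le_pow_left₀ (by positivity) h 2
        · rw [min_eq_right h, min_eq_right]
          rw [← hsq_eq]
          exact pow_le_pow_left₀ hbpos.le h 2
      have hKEY : min 1 (b ^ 2) * min (εg * εh) (εh ^ 3) ≤
          min (εg / ‖d‖ ^ 2) (b ^ 2) * (εh * ‖d‖ ^ 2) := by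
        rcases le_total (εg / ‖d‖ ^ 2) (b ^ 2) with h | h
        · rw [min_eq_left h]
          have heq : εg / ‖d‖ ^ 2 * (εh * ‖d‖ ^ 2) = εg * εh := by
            field_simp
          rw [heq]
          calc min 1 (b ^ 2) * min (εg * εh) (εh ^ 3) ≤ 1 * (εg * εh) := by
                apply mul_le_mul (min_le_left _ _) (min_le_left _ _)
                  (le_min (by positivity) (by positivity)) (by norm_num)
            _ = εg * εh := one_mul _
        · rw [min_eq_right h]
          calc min 1 (b ^ 2) * min (εg * εh) (εh ^ 3) ≤ b ^ 2 * εh ^ 3 := by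
                apply mul_le_mul (min_le_right _ _) (min_le_right _ _)
                  (le_min (by positivity) (by positivity)) (sq_nonneg b)
            _ ≤ b ^ 2 * (εh * ‖d‖ ^ 2) := by
                apply mul_le_mul_of_nonneg_left _ (sq_nonneg b)
                nlinarith [mul_le_mul hdnorm hdnorm hεh0.le hd.le, hεh0]
      calc η * θ ^ 2 * min 1 (b ^ 2) * min (εg * εh) (εh ^ 3)
          = η * θ ^ 2 * (min 1 (b ^ 2) * min (εg * εh) (εh ^ 3)) := by ring
        _ ≤ η * θ ^ 2 * (min (εg / ‖d‖ ^ 2) (b ^ 2) * (εh * ‖d‖ ^ 2)) :=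
            mul_le_mul_of_nonneg_left hKEY (by positivity)
        _ = η * ((θ * min (Real.sqrt εg / ‖d‖) b) ^ 2) * εh * ‖d‖ ^ 2 := by
            rw [mul_pow, hm2]
            ring
        _ ≤ η * (θ ^ j) ^ 2 * εh * ‖d‖ ^ 2 := by gcongr
        _ = η * θ ^ (2 * j) * εh * ‖d‖ ^ 2 := by
            rw [mul_comm 2 j, pow_mul]
  linarith [hPj, hsuffices]
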